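/- In ℝ^{r+1} with the standard inner product, let Δ = A_r = {e_i − e_j : 1 ≤ i ≠ j ≤ r+1}, with fundamental system Π = {α_i = e_i − e_{i+1} : 1 ≤ i ≤ r}, dual vectors α^l in span(Δ) determined by ⟨α^l, α_j⟩ = δ_{lj}, and Σ_Y = {λ ∈ Δ : ⟨λ,Y⟩ ∈ πℤ}. Then: (a) for every 1 ≤ i ≤ r there exists a linear isometry f of ℝ^{r+1} with f(Δ) = Δ and f(Σ_{(π/2)α^i}) = Σ_{(π/2)α^{r+1−i}}; (b) for every 1 ≤ j < k ≤ r there exists a linear isometry g of ℝ^{r+1}, given by a permutation of the standard basis vectors, with g(Δ) = Δ and g(Σ_{(π/2)(α^j + α^k)}) = Σ_{(π/2)α^{k−j}}. -/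
import Mathlib


open RealInnerProductSpace

namespace Stmt7Aux
noncomputable def permIso (n : ℕ) (σ : Equiv.Perm (Fin n)) :
    EuclideanSpace ℝ (Fin n) ≃ₗᵢ[ℝ] EuclideanSpace ℝ (Fin n) :=
  LinearIsometryEquiv.piLpCongrLeft 2 ℝ ℝ σ

lemma permIso_single (n : ℕ) (σ : Equiv.Perm (Fin n)) (i : Fin n) :
    permIso n σ (EuclideanSpace.single i (1:ℝ)) = EuclideanSpace.single (σ i) 1 :=
  LinearIsometryEquiv.piLpCongrLeft_single σ i 1

lemma permIso_apply (n : ℕ) (σ : Equiv.Perm (Fin n)) (v : EuclideanSpace ℝ (Fin n))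
    (x : Fin n) : permIso n σ v x = v (σ.symm x) := rfl

lemma permIso_symm (n : ℕ) (σ : Equiv.Perm (Fin n)) :
    (permIso n σ).symm = permIso n σ.symm :=
  LinearIsometryEquiv.piLpCongrLeft_symm σ

lemma cond_iff (v : ℝ) :
    (∃ k : ℤ, Real.pi / 2 * v = (k:ℝ) * Real.pi) ↔ ∃ k : ℤ, v = 2 * k := by
  constructor
  · rintro ⟨k, hk⟩
    refine ⟨k, mul_left_cancel₀ Real.pi_ne_zero ?_⟩
    linear_combination 2 * hk
  · rintro ⟨k, hk⟩
    exact ⟨k, by rw [hk]; ring⟩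

lemma int_cond_iff (z : ℤ) :
    (∃ k : ℤ, ((z:ℝ)) = 2 * k) ↔ z % 2 = 0 := by
  constructor
  · rintro ⟨k, hk⟩
    have : z = 2 * k := by exact_mod_cast hk
    omega
  · intro h
    obtain ⟨k, hk⟩ : ∃ k, z = 2 * k := ⟨z / 2, by omega⟩
    exact ⟨k, by rw [hk]; push_cast; ring⟩

lemma tele {r : ℕ} (d : Fin (r+1) → ℝ) (m : Fin r)
    (h : ∀ p : Fin r, d p.castSucc - d p.succ = if p = m then 1 else 0) (a b : Fin (r+1)) :
    d a - d b =
      (((if (m:ℕ) < (b:ℕ) then (1:ℤ) else 0) - (if (m:ℕ) < (a:ℕ) then 1 else 0) : ℤ) : ℝ) := by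
  have base : ∀ a : Fin (r+1), d a = d 0 - (if (m:ℕ) < (a:ℕ) then (1:ℝ) else 0) := by
    intro a
    induction a using Fin.induction with
    | zero => simp
    | succ p ih =>
      have hp := h p
      simp only [Fin.coe_castSucc] at ih
      simp only [Fin.val_succ]
      by_cases hpm : (p:ℕ) = (m:ℕ)
      · rw [if_pos (Fin.ext hpm)] at hp
        split_ifs at ih ⊢ <;> first | linarith | omega
      · rw [if_neg (fun hh => hpm (by rw [hh]))] at hp
        split_ifs at ih ⊢ <;> first | linarith | omega
  rw [base a, base b]
  push_cast
  split_ifs <;> ring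

end Stmt7Aux


open Stmt7Aux in
/-- **Equivalences among the sets `Σ_Y` for `Δ = A_r`.**
(a) For every `i` (0-based index in `Fin r`), there is a linear isometry `f` of `ℝ^{r+1}`
with `f(Δ) = Δ` carrying `Σ_{(π/2)αⁱ}` onto `Σ_{(π/2)α^{rev i}}` (where `rev` corresponds
to the 1-based index `r + 1 − i`).
(b) For 1-based `j < k`, there is a linear isometry `g` given by a permutation of the
standard basis vectors, with `g(Δ) = Δ`, carrying `Σ_{(π/2)(αʲ + αᵏ)}` onto
`Σ_{(π/2)α^{k−j}}`. -/
theorem stmt_7 (r : ℕ)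
    (e : Fin (r + 1) → EuclideanSpace ℝ (Fin (r + 1)))
    (he : ∀ i, e i = EuclideanSpace.single i (1 : ℝ))
    (Δ : Set (EuclideanSpace ℝ (Fin (r + 1))))
    (hΔ : Δ = {v | ∃ i j : Fin (r + 1), i ≠ j ∧ v = e i - e j})
    (α : Fin r → EuclideanSpace ℝ (Fin (r + 1)))
    (hα : ∀ i : Fin r, α i = e i.castSucc - e i.succ) :
    (∀ (i : Fin r) (d₁ d₂ : EuclideanSpace ℝ (Fin (r + 1))),
      d₁ ∈ Submodule.span ℝ Δ → d₂ ∈ Submodule.span ℝ Δ →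
      (∀ j : Fin r, ⟪d₁, α j⟫ = if j = i then 1 else 0) →
      (∀ j : Fin r, ⟪d₂, α j⟫ = if j = i.rev then 1 else 0) →
      ∃ f : EuclideanSpace ℝ (Fin (r + 1)) ≃ₗᵢ[ℝ] EuclideanSpace ℝ (Fin (r + 1)),
        f '' Δ = Δ ∧
        f '' {lam | lam ∈ Δ ∧ ∃ k : ℤ, ⟪lam, (Real.pi / 2) • d₁⟫ = (k : ℝ) * Real.pi} =
          {lam | lam ∈ Δ ∧ ∃ k : ℤ, ⟪lam, (Real.pi / 2) • d₂⟫ = (k : ℝ) * Real.pi}) ∧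
    (∀ (j k t : Fin r), j < k → (t : ℕ) + (j : ℕ) + 1 = (k : ℕ) →
      ∀ d₁ d₂ d₃ : EuclideanSpace ℝ (Fin (r + 1)),
      d₁ ∈ Submodule.span ℝ Δ → d₂ ∈ Submodule.span ℝ Δ → d₃ ∈ Submodule.span ℝ Δ →
      (∀ p : Fin r, ⟪d₁, α p⟫ = if p = j then 1 else 0) →
      (∀ p : Fin r, ⟪d₂, α p⟫ = if p = k then 1 else 0) →
      (∀ p : Fin r, ⟪d₃, α p⟫ = if p = t then 1 else 0) →
      ∃ g : EuclideanSpace ℝ (Fin (r + 1)) ≃ₗᵢ[ℝ] EuclideanSpace ℝ (Fin (r + 1)),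
        (∃ σ : Equiv.Perm (Fin (r + 1)), ∀ p, g (e p) = e (σ p)) ∧
        g '' Δ = Δ ∧
        g '' {lam | lam ∈ Δ ∧
            ∃ c : ℤ, ⟪lam, (Real.pi / 2) • (d₁ + d₂)⟫ = (c : ℝ) * Real.pi} =
          {lam | lam ∈ Δ ∧ ∃ c : ℤ, ⟪lam, (Real.pi / 2) • d₃⟫ = (c : ℝ) * Real.pi}) := by
  have hinner_sub : ∀ (w : EuclideanSpace ℝ (Fin (r+1))) (a b : Fin (r+1)),
      ⟪e a - e b, w⟫ = w a - w b := by
    intro w a b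
    rw [he, he, inner_sub_left]
    simp [EuclideanSpace.inner_single_left]
  have hpair : ∀ (d : EuclideanSpace ℝ (Fin (r+1))) (m : Fin r),
      (∀ p : Fin r, ⟪d, α p⟫ = if p = m then 1 else 0) →
      ∀ p : Fin r, d p.castSucc - d p.succ = if p = m then 1 else 0 := by
    intro d m hd p
    have h0 := hd p
    rw [hα, he, he, inner_sub_right] at h0
    simpa [EuclideanSpace.inner_single_right] using h0
  have hdiff : ∀ (d : EuclideanSpace ℝ (Fin (r+1))) (m : Fin r),
      (∀ p : Fin r, ⟪d, α p⟫ = if p = m then 1 else 0) →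
      ∀ a b : Fin (r+1), d a - d b =
        (((if (m:ℕ) < (b:ℕ) then (1:ℤ) else 0) - (if (m:ℕ) < (a:ℕ) then 1 else 0) : ℤ) : ℝ) :=
    fun d m hd a b => tele d m (hpair d m hd) a b
  have hmem : ∀ (σ : Equiv.Perm (Fin (r+1))) (v : EuclideanSpace ℝ (Fin (r+1))),
      v ∈ Δ → permIso (r+1) σ v ∈ Δ := by
    intro σ v hv
    rw [hΔ] at hv ⊢
    obtain ⟨a, b, hab, rfl⟩ := hv
    refine ⟨σ a, σ b, fun hh => hab (σ.injective hh), ?_⟩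
    rw [map_sub, he, he, he, he, permIso_single, permIso_single]
  have himg : ∀ σ : Equiv.Perm (Fin (r+1)), permIso (r+1) σ '' Δ = Δ := by
    intro σ
    apply Set.Subset.antisymm
    · rintro v ⟨w, hw, rfl⟩; exact hmem σ w hw
    · intro v hv
      refine ⟨permIso (r+1) σ.symm v, hmem σ.symm v hv, ?_⟩
      rw [← permIso_symm]
      exact (permIso (r+1) σ).apply_symm_apply v
  have hsetS : ∀ (σ : Equiv.Perm (Fin (r+1))) (d : EuclideanSpace ℝ (Fin (r+1))),
      permIso (r+1) σ ''
          {lam | lam ∈ Δ ∧ ∃ c : ℤ, ⟪lam, (Real.pi/2) • d⟫ = (c:ℝ) * Real.pi} =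
        {lam | lam ∈ Δ ∧
          ∃ c : ℤ, ⟪lam, (Real.pi/2) • (permIso (r+1) σ d)⟫ = (c:ℝ) * Real.pi} := by
    intro σ d
    apply Set.Subset.antisymm
    · rintro v ⟨w, ⟨hwΔ, c, hc⟩, rfl⟩
      refine ⟨hmem σ w hwΔ, c, ?_⟩
      rw [← map_smul, (permIso (r+1) σ).inner_map_map]
      exact hc
    · rintro v ⟨hvΔ, c, hc⟩
      refine ⟨(permIso (r+1) σ).symm v, ⟨?_, c, ?_⟩, (permIso (r+1) σ).apply_symm_apply v⟩
      · rw [permIso_symm]; exact hmem σ.symm v hvΔ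
      · rw [← (permIso (r+1) σ).inner_map_map, (permIso (r+1) σ).apply_symm_apply, map_smul]
        exact hc
  have hcond : ∀ (w : EuclideanSpace ℝ (Fin (r+1))) (a b : Fin (r+1)) (z : ℤ),
      w a - w b = (z:ℝ) →
      ((∃ c : ℤ, ⟪e a - e b, (Real.pi/2) • w⟫ = (c:ℝ) * Real.pi) ↔ z % 2 = 0) := by
    intro w a b z hz
    have h1 : ⟪e a - e b, (Real.pi/2) • w⟫ = Real.pi/2 * (w a - w b) := by
      rw [real_inner_smul_right, hinner_sub]
    rw [h1, hz] at *
    simp only [hz]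
    rw [cond_iff, int_cond_iff]
  constructor
  · -- part (a)
    intro i d₁ d₂ _ _ hd₁ hd₂
    refine ⟨permIso (r+1) Fin.revPerm, himg _, ?_⟩
    rw [hsetS]
    have hiff : ∀ v ∈ Δ,
        ((∃ c : ℤ, ⟪v, (Real.pi/2) • (permIso (r+1) Fin.revPerm d₁)⟫ = (c:ℝ) * Real.pi) ↔
          (∃ c : ℤ, ⟪v, (Real.pi/2) • d₂⟫ = (c:ℝ) * Real.pi)) := by
      intro v hv
      rw [hΔ] at hv
      obtain ⟨a, b, hab, rfl⟩ := hv
      have hsymm : (Fin.revPerm : Equiv.Perm (Fin (r+1))).symm = Fin.revPerm :=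
        Fin.revPerm_symm
      have hz₁ : (permIso (r+1) Fin.revPerm d₁) a - (permIso (r+1) Fin.revPerm d₁) b =
          ((((if (i:ℕ) < ((b.rev : Fin (r+1)):ℕ) then (1:ℤ) else 0) -
            (if (i:ℕ) < ((a.rev : Fin (r+1)):ℕ) then 1 else 0)) : ℤ) : ℝ) := by
        rw [permIso_apply, permIso_apply, hsymm]
        exact hdiff d₁ i hd₁ a.rev b.rev
      rw [hcond _ a b _ hz₁, hcond d₂ a b _ (hdiff d₂ i.rev hd₂ a b)]
      have hi := i.isLt
      have ha := a.isLt
      have hb := b.isLt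
      simp only [Fin.val_rev] at *
      split_ifs <;> omega
    ext v
    exact ⟨fun ⟨h1, h2⟩ => ⟨h1, (hiff v h1).1 h2⟩, fun ⟨h1, h2⟩ => ⟨h1, (hiff v h1).2 h2⟩⟩
  · -- part (b)
    intro j k t hjk hjkt d₁ d₂ d₃ _ _ _ hd₁ hd₂ hd₃
    have hc1 : (j:ℕ) + 1 < r + 1 := by have := k.isLt; omega
    set c : Fin (r+1) := ⟨(j:ℕ)+1, hc1⟩ with hcdef
    set σ : Equiv.Perm (Fin (r+1)) := Equiv.subRight c with hσ
    refine ⟨permIso (r+1) σ, ⟨σ, fun p => ?_⟩, himg σ, ?_⟩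
    · rw [he, he, permIso_single]
    rw [hsetS]
    have hval : ∀ x : Fin (r+1),
        ((σ.symm x : Fin (r+1)) : ℕ) = (x:ℕ) + (j:ℕ) + 1 ∨
          ((σ.symm x : Fin (r+1)) : ℕ) + (r+1) = (x:ℕ) + (j:ℕ) + 1 := by
      intro x
      have h1 : ((σ.symm x : Fin (r+1)) : ℕ) = ((x:ℕ) + ((j:ℕ)+1)) % (r+1) := by
        have h2 : σ.symm x = x + c := rfl
        rw [h2, Fin.val_add]
      have hx := x.isLt
      rcases Nat.lt_or_ge ((x:ℕ) + ((j:ℕ)+1)) (r+1) with h | h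
      · left; rw [h1, Nat.mod_eq_of_lt h]; omega
      · right
        rw [h1, Nat.mod_eq_sub_mod h, Nat.mod_eq_of_lt (by omega)]
        omega
    have hiff : ∀ v ∈ Δ,
        ((∃ c' : ℤ, ⟪v, (Real.pi/2) • (permIso (r+1) σ (d₁ + d₂))⟫ = (c':ℝ) * Real.pi) ↔
          (∃ c' : ℤ, ⟪v, (Real.pi/2) • d₃⟫ = (c':ℝ) * Real.pi)) := by
      intro v hv
      rw [hΔ] at hv
      obtain ⟨a, b, hab, rfl⟩ := hv
      have e1 := hdiff d₁ j hd₁ (σ.symm a) (σ.symm b)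
      have e2 := hdiff d₂ k hd₂ (σ.symm a) (σ.symm b)
      have hz₁ : (permIso (r+1) σ (d₁ + d₂)) a - (permIso (r+1) σ (d₁ + d₂)) b =
          (((((if (j:ℕ) < ((σ.symm b : Fin (r+1)):ℕ) then (1:ℤ) else 0) -
              (if (j:ℕ) < ((σ.symm a : Fin (r+1)):ℕ) then 1 else 0)) +
            ((if (k:ℕ) < ((σ.symm b : Fin (r+1)):ℕ) then (1:ℤ) else 0) -
              (if (k:ℕ) < ((σ.symm a : Fin (r+1)):ℕ) then 1 else 0))) : ℤ) : ℝ) := by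
        rw [permIso_apply, permIso_apply]
        have hadd : ∀ x : Fin (r+1), (d₁ + d₂) x = d₁ x + d₂ x := fun _ => rfl
        rw [hadd, hadd]
        push_cast
        push_cast at e1 e2
        linarith
      rw [hcond _ a b _ hz₁, hcond d₃ a b _ (hdiff d₃ t hd₃ a b)]
      have hjk' : (j:ℕ) < (k:ℕ) := hjk
      have hk := k.isLt
      have ha := a.isLt
      have hb := b.isLt
      have hA := hval a
      have hB := hval b
      have hsa := (σ.symm a).isLt
      have hsb := (σ.symm b).isLt
      split_ifs <;> omega
    ext v
    exact ⟨fun ⟨h1, h2⟩ => ⟨h1, (hiff v h1).1 h2⟩, fun ⟨h1, h2⟩ => ⟨h1, (hiff v h1).2 h2⟩⟩
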